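/- Let I ⊆ ℝ be an interval that is unbounded above or below, and let a : I → ℝ be continuously differentiable with a(η) > 0 and a'(η) > 0 for all η ∈ I. For η₀ ∈ I define A_{η₀}(η) = (η₀ − η)·a(η) on {η ∈ I : η < η₀}. Suppose there exists a continuous function g : I → ℝ such that for every η₀ ∈ I: g(η₀) ∈ I, g(η₀) < η₀, and g(η₀) is a local maximum point of A_{η₀}. Then for every η₀ ∈ I, the function A_{η₀} attains a global maximum on {η ∈ I : η < η₀}; in particular its supremum there is finite. -/

import Mathlib

open Real Filter Topology

/-- Partial converse: if a continuous holographic screen with local-maximum leaves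
exists on every past light cone, then every light cone has a globally maximal area
slice (so the supremum of `A_{η₀}` is finite and attained). -/
theorem stmt_16 (I : Set ℝ) (hI : I.OrdConnected) (hne : I.Nonempty)
    (hunb : ¬ BddAbove I ∨ ¬ BddBelow I)
    (a : ℝ → ℝ)
    (ha_diff : ∀ η ∈ I, DifferentiableAt ℝ a η)
    (ha_cont : ContinuousOn (deriv a) I)
    (ha_pos : ∀ η ∈ I, 0 < a η)
    (ha_incr : ∀ η ∈ I, 0 < deriv a η)
    (g : ℝ → ℝ) (hgc : ContinuousOn g I)
    (hg : ∀ η₀ ∈ I, g η₀ ∈ I ∧ g η₀ < η₀ ∧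
      IsLocalMaxOn (fun η => (η₀ - η) * a η) {η | η ∈ I ∧ η < η₀} (g η₀)) :
    ∀ η₀ ∈ I, ∃ ηm, ηm ∈ I ∧ ηm < η₀ ∧
      ∀ η ∈ I, η < η₀ → (η₀ - η) * a η ≤ (η₀ - ηm) * a ηm := by
  intro η₀ hη₀
  obtain ⟨hgI, hglt, hgmax⟩ := hg η₀ hη₀
  set s₀ := g η₀ with hs₀def
  have hsub : ∀ x y : ℝ, x ∈ I → y ∈ I → Set.Icc x y ⊆ I := fun x y hx hy => hI.out hx hy
  have haC : ContinuousOn a I := fun x hx => (ha_diff x hx).continuousAt.continuousWithinAt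
  -- derivative formula
  have hderiv : ∀ t : ℝ, ∀ s ∈ I, HasDerivAt (fun x => (t - x) * a x)
      ((t - s) * deriv a s - a s) s := by
    intro t s hs
    have h1 : HasDerivAt (fun x : ℝ => t - x) (-1) s := (hasDerivAt_id s).const_sub t
    have h2 := (ha_diff s hs).hasDerivAt
    have := h1.mul h2
    exact this.congr_deriv (by ring)
  -- critical point equation at interior screen points
  have hcrit : ∀ t ∈ I, ∀ β ∈ I, β < g t → (t - g t) * deriv a (g t) = a (g t) := by
    intro t ht β hβ hβlt
    obtain ⟨hgtI, hgtlt, hmax⟩ := hg t ht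
    have hnbhd : {η | η ∈ I ∧ η < t} ∈ 𝓝 (g t) := by
      have hIoo : Set.Ioo β t ∈ 𝓝 (g t) := Ioo_mem_nhds hβlt hgtlt
      filter_upwards [hIoo] with x hx
      exact ⟨hsub β t hβ ht ⟨hx.1.le, hx.2.le⟩, hx.2⟩
    have hlm : IsLocalMax (fun x => (t - x) * a x) (g t) := by
      have : 𝓝[{η | η ∈ I ∧ η < t}] (g t) = 𝓝 (g t) := nhdsWithin_eq_nhds.mpr hnbhd
      unfold IsLocalMax IsLocalMaxOn at *
      rwa [this] at hmax
    have h0 := hlm.deriv_eq_zero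
    have hD := (hderiv t (g t) hgtI).deriv
    rw [hD] at h0
    linarith
  -- monotonicity up to s₀
  have hmono : ∀ η ∈ I, η ≤ s₀ → (η₀ - η) * a η ≤ (η₀ - s₀) * a s₀ := by
    intro η hη hle
    rcases eq_or_lt_of_le hle with h | h
    · rw [h]
    have hIcc : Set.Icc η s₀ ⊆ I := hsub η s₀ hη hgI
    have hmon : MonotoneOn (fun x => (η₀ - x) * a x) (Set.Icc η s₀) := by
      apply monotoneOn_of_deriv_nonneg (convex_Icc η s₀)
      · exact (continuousOn_const.sub continuousOn_id).mul (haC.mono hIcc)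
      · intro x hx
        rw [interior_Icc] at hx
        exact (hderiv η₀ x (hIcc (Set.Ioo_subset_Icc_self hx))).differentiableAt.differentiableWithinAt
      · intro x hx
        rw [interior_Icc] at hx
        have hxI : x ∈ I := hIcc (Set.Ioo_subset_Icc_self hx)
        obtain ⟨hgηI, hgηlt, _⟩ := hg η hη
        have hηle : η ≤ η₀ := le_of_lt (lt_of_le_of_lt hle hglt)
        have hIVT : Set.Icc (g η) (g η₀) ⊆ g '' Set.Icc η η₀ :=
          intermediate_value_Icc hηle (hgc.mono (hsub η η₀ hη hη₀))
        obtain ⟨t, htmem, hgt⟩ := hIVT ⟨le_of_lt (lt_trans hgηlt hx.1), hx.2.le⟩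
        have htI : t ∈ I := hsub η η₀ hη hη₀ htmem
        have hcx := hcrit t htI η hη (by rw [hgt]; exact hx.1)
        rw [hgt] at hcx
        have hD := (hderiv η₀ x hxI).deriv
        rw [hD]
        have heq : (η₀ - x) * deriv a x - a x = (η₀ - t) * deriv a x := by
          rw [← hcx]; ring
        rw [heq]
        have hd := ha_incr x hxI
        nlinarith [htmem.2]
    exact hmon (Set.left_mem_Icc.mpr hle) (Set.right_mem_Icc.mpr hle) hle
  -- max on [s₀, η₀]
  have hAcont : ContinuousOn (fun x => (η₀ - x) * a x) (Set.Icc s₀ η₀) :=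
    (continuousOn_const.sub continuousOn_id).mul (haC.mono (hsub s₀ η₀ hgI hη₀))
  obtain ⟨ηm, hηmmem, hηmmax⟩ :=
    isCompact_Icc.exists_isMaxOn ⟨s₀, Set.left_mem_Icc.mpr hglt.le⟩ hAcont
  have hmle : (η₀ - s₀) * a s₀ ≤ (η₀ - ηm) * a ηm :=
    hηmmax (Set.left_mem_Icc.mpr hglt.le)
  have hs0pos : 0 < (η₀ - s₀) * a s₀ := mul_pos (sub_pos.mpr hglt) (ha_pos s₀ hgI)
  have hηmlt : ηm < η₀ := by
    rcases lt_or_eq_of_le hηmmem.2 with h | h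
    · exact h
    · exfalso
      rw [h] at hmle
      simp at hmle
      nlinarith
  refine ⟨ηm, hsub s₀ η₀ hgI hη₀ hηmmem, hηmlt, ?_⟩
  intro η hη hlt
  rcases le_or_gt η s₀ with h | h
  · exact le_trans (hmono η hη h) hmle
  · exact hηmmax ⟨h.le, hlt.le⟩
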